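/- Let m > 1 and L ≥ 0. Define B(v) = (1/m) ∫₀^v (L - s)^{1/m - 1} s ds for 0 ≤ v ≤ L. Then for every v with 0 ≤ v^m ≤ L, one has B((L - v^m)₊) ≤ (L - v^m)₊ · (L^{1/m} - v)₊. -/

import Mathlib

open MeasureTheory intervalIntegral

/-- For `m > 1`, `L ≥ 0`, `0 ≤ v` with `v^m ≤ L`, the function
`B(w) = (1/m) ∫₀^w (L - s)^{1/m-1} s ds` satisfies
`B((L - v^m)₊) ≤ (L - v^m)₊ (L^{1/m} - v)₊`. -/
theorem stmt0 (m L v : ℝ) (hm : 1 < m) (hL : 0 ≤ L) (hv : 0 ≤ v) (hvm : v ^ m ≤ L) :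
    (1/m) * ∫ s in (0:ℝ)..(max (L - v ^ m) 0), (L - s) ^ (1/m - 1) * s ≤
      max (L - v ^ m) 0 * max (L ^ (1/m) - v) 0 := by
  have hm0 : (0:ℝ) < m := lt_trans zero_lt_one hm
  have hvm0 : 0 ≤ v ^ m := Real.rpow_nonneg hv m
  have hw : 0 ≤ L - v ^ m := sub_nonneg.mpr hvm
  have hvmv : (v ^ m) ^ (1/m) = v := by
    rw [← Real.rpow_mul hv, mul_one_div, div_self (ne_of_gt hm0), Real.rpow_one]
  have hva : v ≤ L ^ (1/m) := by
    calc v = (v ^ m) ^ (1/m) := hvmv.symm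
    _ ≤ L ^ (1/m) := Real.rpow_le_rpow hvm0 hvm (by positivity)
  set w := L - v ^ m with hwdef
  have hr : (-1:ℝ) < 1/m - 1 := by
    have : (0:ℝ) < 1/m := by positivity
    linarith
  rw [max_eq_left hw, max_eq_left (sub_nonneg.mpr hva)]
  -- integrability
  have hInt : IntervalIntegrable (fun s => (L - s) ^ (1/m - 1)) volume 0 w := by
    have h := (intervalIntegrable_rpow' (a := L) (b := L - w) hr).comp_sub_left L
    simpa using h
  have hInt2 : IntervalIntegrable (fun s => (L - s) ^ (1/m - 1) * s) volume 0 w :=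
    hInt.mul_continuousOn continuousOn_id
  -- the key integral value
  have hI : (∫ s in (0:ℝ)..w, (L - s) ^ (1/m - 1)) = m * (L ^ (1/m) - v) := by
    rw [intervalIntegral.integral_comp_sub_left (fun u => u ^ (1/m - 1)) L]
    rw [integral_rpow (Or.inl hr)]
    have : 1/m - 1 + 1 = 1/m := by ring
    rw [this]
    have hLw : L - w = v ^ m := by rw [hwdef]; ring
    rw [sub_zero, hLw, hvmv]
    field_simp
  -- pointwise bound and monotonicity
  have hmono : (∫ s in (0:ℝ)..w, (L - s) ^ (1/m - 1) * s)
      ≤ ∫ s in (0:ℝ)..w, (L - s) ^ (1/m - 1) * w := by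
    apply intervalIntegral.integral_mono_on hw hInt2 (hInt.mul_const w)
    intro s hs
    have hLs : 0 ≤ L - s := by
      have : s ≤ w := hs.2
      have : 0 ≤ v ^ m := hvm0
      simp only [hwdef] at *
      linarith
    exact mul_le_mul_of_nonneg_left hs.2 (Real.rpow_nonneg hLs _)
  have hval : (∫ s in (0:ℝ)..w, (L - s) ^ (1/m - 1) * w) = m * (L ^ (1/m) - v) * w := by
    rw [intervalIntegral.integral_mul_const, hI]
  calc (1/m) * ∫ s in (0:ℝ)..w, (L - s) ^ (1/m - 1) * s
      ≤ (1/m) * (m * (L ^ (1/m) - v) * w) := by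
        rw [← hval]; exact mul_le_mul_of_nonneg_left hmono (by positivity)
    _ = w * (L ^ (1/m) - v) := by field_simp
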